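/- arXiv:math/0608781 — 2 statements merged into one kernel-verified Lean document; each statement's English description precedes it below -/
import Mathlib

section
/- Let H be a finite-dimensional Hopf algebra. The space End(H*) is a right Hopf module over H with left H*-action (α · f)(β) = f(β α₂)S⁻¹(α₁) and right H-action (f · h)(β) = f(h ⇀ β); that is, the compatibility α · (m · h) = (α₁ · m) · (α₂ ⇀ h) holds. -/
open TensorProduct

/-- Convolution product on `H* = Dual k H`. -/
noncomputable def conv {k H : Type*} [CommSemiring k] [Semiring H] [HopfAlgebra k H]
    (α β : Module.Dual k H) : Module.Dual k H :=
  (LinearMap.mul' k k) ∘ₗ (TensorProduct.map α β) ∘ₗ (Coalgebra.comul (R := k))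

/-- The action `⇀` of `H` on `H*`: `⟨h ⇀ β, x⟩ = ⟨β, x h⟩`. -/
noncomputable def hR {k H : Type*} [CommSemiring k] [Semiring H] [Algebra k H]
    (h : H) (β : Module.Dual k H) : Module.Dual k H :=
  β ∘ₗ LinearMap.mulRight k h

/-- The action `⇀` of `H*` on `H`: `α ⇀ h = ⟨α, h₂⟩ h₁`. -/
noncomputable def coevR {k H : Type*} [CommSemiring k] [Semiring H] [HopfAlgebra k H]
    (α : Module.Dual k H) : H →ₗ[k] H :=
  (TensorProduct.rid k H).toLinearMap ∘ₗ
    (TensorProduct.map LinearMap.id α) ∘ₗ (Coalgebra.comul (R := k))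

section Aux

variable {k H : Type*} [Field k] [Ring H] [HopfAlgebra k H]

/-- Splitting lemma: pair a Sweedler decomposition back together. -/
private lemma aux_split {κ : Type} [Fintype κ] (δ : Module.Dual k H)
    (δA δB : κ → Module.Dual k H)
    (hδ : ∀ x y : H, δ (x * y) = ∑ j, δA j x * δB j y)
    (γ : Module.Dual k H) (w : H) (t : H ⊗[k] H) :
    ∑ j, (LinearMap.mul' k k) (TensorProduct.map γ (δB j) t) * δA j w
      = (LinearMap.mul' k k) (TensorProduct.map γ (δ ∘ₗ LinearMap.mulLeft k w) t) := by
  induction t using TensorProduct.induction_on with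
  | zero => simp
  | tmul a b =>
      simp only [TensorProduct.map_tmul, LinearMap.mul'_apply, LinearMap.comp_apply,
        LinearMap.mulLeft_apply, hδ w b, Finset.mul_sum]
      exact Finset.sum_congr rfl fun j _ => by ring
  | add u v hu hv =>
      simp only [map_add, add_mul, Finset.sum_add_distrib, hu, hv]

private lemma aux_core {ι : Type} [Fintype ι] (α : Module.Dual k H)
    (αA αB : ι → Module.Dual k H)
    (hΔ : ∀ x y : H, α (x * y) = ∑ i, αA i x * αB i y)
    (β : Module.Dual k H) (w : H) (cx ch : H ⊗[k] H) :
    (LinearMap.mul' k k) (TensorProduct.map β (α ∘ₗ LinearMap.mulLeft k w) (cx * ch))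
      = ∑ i, (LinearMap.mul' k k)
          (TensorProduct.map
            (β ∘ₗ LinearMap.mulRight k
              ((TensorProduct.rid k H) (TensorProduct.map LinearMap.id (αB i) ch)))
            (αA i ∘ₗ LinearMap.mulLeft k w) cx) := by
  induction cx using TensorProduct.induction_on with
  | zero => simp
  | add u v hu hv => simp only [add_mul, map_add, hu, hv, Finset.sum_add_distrib]
  | tmul a b =>
      simp only [TensorProduct.map_tmul, LinearMap.mul'_apply, LinearMap.comp_apply,
        LinearMap.mulRight_apply, LinearMap.mulLeft_apply]
      induction ch using TensorProduct.induction_on with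
      | zero => simp
      | tmul c d =>
          simp only [TensorProduct.map_tmul, LinearMap.id_coe, id_eq,
            TensorProduct.rid_tmul, Algebra.TensorProduct.tmul_mul_tmul,
            LinearMap.mul'_apply, mul_smul_comm, map_smul, smul_eq_mul,
            LinearMap.comp_apply, LinearMap.mulLeft_apply]
          rw [← mul_assoc w b d, hΔ (w * b) d, Finset.mul_sum]
          exact Finset.sum_congr rfl fun i _ => by ring
      | add u v hu hv =>
          simp only [mul_add, map_add, hu, hv, add_mul, Finset.sum_add_distrib]

private lemma conv_add_left (f f' g : Module.Dual k H) :
    conv (f + f') g = conv f g + conv f' g := by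
  ext x
  simp [conv, TensorProduct.map_add_left]

private lemma conv_smul_left (c : k) (f g : Module.Dual k H) :
    conv (c • f) g = c • conv f g := by
  ext x
  simp [conv, TensorProduct.map_smul_left]

private lemma conv_add_right (f g g' : Module.Dual k H) :
    conv f (g + g') = conv f g + conv f g' := by
  ext x
  simp [conv, TensorProduct.map_add_right]

private lemma conv_smul_right (c : k) (f g : Module.Dual k H) :
    conv f (c • g) = c • conv f g := by
  ext x
  simp [conv, TensorProduct.map_smul_right]

/-- `conv` as a bilinear map. -/
private noncomputable def convBil :
    Module.Dual k H →ₗ[k] Module.Dual k H →ₗ[k] Module.Dual k H :=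
  LinearMap.mk₂ k conv conv_add_left conv_smul_left conv_add_right conv_smul_right

end Aux

/-- The Hopf-module compatibility `α · (m · h) = (α₁ · m) · (α₂ ⇀ h)` for the
actions `(α · f)(β) = f(β α₂) S⁻¹(α₁)` and `(f · h)(β) = f(h ⇀ β)` on `End(H*)`. -/
theorem stmt4 {k H : Type*} [Field k] [Ring H] [HopfAlgebra k H] [FiniteDimensional k H]
    (Sinv : H →ₗ[k] H)
    (hS1 : ∀ x, Sinv ((HopfAlgebra.antipode (R := k) : H →ₗ[k] H) x) = x)
    (hS2 : ∀ x, (HopfAlgebra.antipode (R := k) : H →ₗ[k] H) (Sinv x) = x)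
    (m : Module.Dual k H →ₗ[k] Module.Dual k H) (h : H) (α : Module.Dual k H)
    (ι : Type) [Fintype ι] (αA αB : ι → Module.Dual k H)
    (hΔ : ∀ x y : H, α (x * y) = ∑ i, αA i x * αB i y)
    (κ : Type) [Fintype κ] (βA βB : ι → κ → Module.Dual k H)
    (hΔ' : ∀ i, ∀ x y : H, αA i (x * y) = ∑ j, βA i j x * βB i j y)
    (β : Module.Dual k H) :
    ∑ i, conv (m ((conv β (αB i)) ∘ₗ LinearMap.mulRight k h)) ((αA i) ∘ₗ Sinv)
      = ∑ i, ∑ j,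
          conv
            (m (conv (β ∘ₗ LinearMap.mulRight k (coevR (αB i) h)) (βB i j)))
            ((βA i j) ∘ₗ Sinv) := by
  classical
  -- `L (γ ⊗ δ) = conv (m γ) δ`
  set L : (Module.Dual k H ⊗[k] Module.Dual k H) →ₗ[k] Module.Dual k H :=
    TensorProduct.lift (convBil ∘ₗ m) with hLdef
  have hL : ∀ γ δ : Module.Dual k H, L (γ ⊗ₜ[k] δ) = conv (m γ) δ := fun γ δ => rfl
  -- key tensor identity
  have hinj : Function.Injective (TensorProduct.dualDistrib k H H) := by
    have hli : Function.LeftInverse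
        (TensorProduct.dualDistribInvOfBasis (Module.Free.chooseBasis k H)
          (Module.Free.chooseBasis k H))
        (TensorProduct.dualDistrib k H H) := fun u =>
      DFunLike.congr_fun
        (TensorProduct.dualDistrib_dualDistribInvOfBasis_right_inverse
          (Module.Free.chooseBasis k H) (Module.Free.chooseBasis k H)) u
    exact hli.injective
  have key : (∑ i, ((conv β (αB i)) ∘ₗ LinearMap.mulRight k h) ⊗ₜ[k] ((αA i) ∘ₗ Sinv))
      = ∑ i, ∑ j,
          (conv (β ∘ₗ LinearMap.mulRight k (coevR (αB i) h)) (βB i j))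
            ⊗ₜ[k] ((βA i j) ∘ₗ Sinv) := by
    apply hinj
    simp only [map_sum]
    apply TensorProduct.ext'
    intro x y
    simp only [LinearMap.sum_apply, TensorProduct.dualDistrib_apply, LinearMap.comp_apply,
      LinearMap.mulRight_apply]
    -- unfold conv applications
    have hconv : ∀ (γ δ : Module.Dual k H) (z : H),
        conv γ δ z = (LinearMap.mul' k k)
          (TensorProduct.map γ δ (Coalgebra.comul (R := k) z)) := fun γ δ z => rfl
    simp only [hconv]
    rw [show (Coalgebra.comul (R := k) (x * h) : H ⊗[k] H)
        = Coalgebra.comul x * Coalgebra.comul h from Bialgebra.comul_mul x h]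
    rw [aux_split α αA αB hΔ β (Sinv y) (Coalgebra.comul x * Coalgebra.comul h)]
    have hrhs : ∀ i, ∑ j, (LinearMap.mul' k k)
          (TensorProduct.map (β ∘ₗ LinearMap.mulRight k (coevR (αB i) h)) (βB i j)
            (Coalgebra.comul (R := k) x)) * βA i j (Sinv y)
        = (LinearMap.mul' k k)
          (TensorProduct.map (β ∘ₗ LinearMap.mulRight k (coevR (αB i) h))
            (αA i ∘ₗ LinearMap.mulLeft k (Sinv y)) (Coalgebra.comul (R := k) x)) :=
      fun i => aux_split (αA i) (βA i) (βB i) (hΔ' i)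
        (β ∘ₗ LinearMap.mulRight k (coevR (αB i) h)) (Sinv y) (Coalgebra.comul x)
    rw [Finset.sum_congr rfl fun i _ => hrhs i]
    have hcoev : ∀ i, coevR (αB i) h
        = (TensorProduct.rid k H)
            (TensorProduct.map LinearMap.id (αB i) (Coalgebra.comul (R := k) h)) :=
      fun i => rfl
    simp only [hcoev]
    exact aux_core α αA αB hΔ β (Sinv y) (Coalgebra.comul x) (Coalgebra.comul h)
  calc ∑ i, conv (m ((conv β (αB i)) ∘ₗ LinearMap.mulRight k h)) ((αA i) ∘ₗ Sinv)
      = L (∑ i, ((conv β (αB i)) ∘ₗ LinearMap.mulRight k h) ⊗ₜ[k] ((αA i) ∘ₗ Sinv)) := by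
        simp only [map_sum, hL]
    _ = L (∑ i, ∑ j,
          (conv (β ∘ₗ LinearMap.mulRight k (coevR (αB i) h)) (βB i j))
            ⊗ₜ[k] ((βA i j) ∘ₗ Sinv)) := by rw [key]
    _ = _ := by simp only [map_sum, hL]
end

section
/- Let G be a finite group, F ≤ G a subgroup, H = kG the group Hopf algebra. Let V be a representation of F (more generally of a twisted group algebra k_σF) and give End(V) the F-action (f·T)(v) = f·T(f⁻¹·v). Then kG ⊗_{kF} End(V), with G acting on the first tensorand and product (x_i ⊗ T)(x_j ⊗ U) = δ_{ij}(x_i ⊗ T∘U) for coset representatives x_i, is a left kG-module algebra. -/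
open scoped TensorProduct

/-- `kG ⊗_{kF} End(V)` is modelled as the algebra `ι → End(V)` (with pointwise
multiplication), where `ι` indexes the cosets `x_i F` of a subgroup `F ≤ G`:
the class of `x_i ⊗ T` corresponds to the function supported at `i` with value `T`.
The `G`-action `g·(x ⊗ T) = gx ⊗ T` becomes, via `g x_i = x_{σ_g(i)} φ(g,i)` and the
projective `F`-action `(f·T)(v) = f·T(f⁻¹·v)` given by conjugation by `u f`,
the action `act` below.  The statement: this makes `kG ⊗_{kF} End(V)` a left
`kG`-module algebra, i.e. `G` acts by `k`-algebra automorphisms. -/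
theorem stmt14 {k : Type*} [Field k] {G : Type*} [Group G] [Fintype G]
    (F : Subgroup G)
    {V : Type*} [AddCommGroup V] [Module k V] [FiniteDimensional k V]
    -- a projective representation (`k_σF`-module structure) on `V`
    (c : F → F → kˣ) (u : F → (V ≃ₗ[k] V))
    (hu : ∀ f f' : F, (u f).toLinearMap ∘ₗ (u f').toLinearMap
        = (c f f' : k) • (u (f * f')).toLinearMap)
    (hc : ∀ f : F, c 1 f = 1) (hc' : ∀ f : F, c f 1 = 1)
    (hu1 : u 1 = LinearEquiv.refl k V)
    -- coset representatives `x_i` and the induced permutation data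
    {ι : Type*} [Fintype ι] (x : ι → G)
    (hx : ∀ g : G, ∃! p : ι × F, g = x p.1 * (p.2 : G))
    (σ : G → ι ≃ ι) (φ : G → ι → F)
    (hrep : ∀ (g : G) (i : ι), g * x i = x (σ g i) * (φ g i : G)) :
    ∀ act : G → (ι → Module.End k V) → (ι → Module.End k V),
      (∀ g a j, act g a j
          = (u (φ g ((σ g).symm j))).toLinearMap ∘ₗ (a ((σ g).symm j)) ∘ₗ
              (u (φ g ((σ g).symm j))).symm.toLinearMap) →
      -- `act` is a `G`-action
      (∀ a, act 1 a = a) ∧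
      (∀ g g' a, act (g * g') a = act g (act g' a)) ∧
      -- `G` acts by `k`-algebra automorphisms, i.e. the linear extension to `kG`
      -- makes `ι → End(V)` a `kG`-module algebra
      (∀ g a b, act g (a * b) = act g a * act g b) ∧
      (∀ g, act g 1 = 1) ∧
      (∀ g a b, act g (a + b) = act g a + act g b) ∧
      (∀ g (r : k) a, act g (r • a) = r • act g a) := by
  intro act hact
  -- uniqueness consequences of `hx`
  have huniq : ∀ (g : G) (i i' : ι) (f f' : F),
      x i * (f : G) = x i' * (f' : G) → i = i' ∧ f = f' := by
    intro g i i' f f' h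
    obtain ⟨p, -, hp⟩ := hx (x i * (f : G))
    have h1 := hp (i, f) rfl
    have h2 := hp (i', f') h
    rw [← h2] at h1
    exact ⟨congrArg Prod.fst h1, congrArg Prod.snd h1⟩
  have hσ1 : ∀ i, σ 1 i = i ∧ φ 1 i = 1 := by
    intro i
    have h := hrep 1 i
    rw [one_mul] at h
    have h' : x i * ((1 : F) : G) = x (σ 1 i) * (φ 1 i : G) := by
      simpa using h
    obtain ⟨h1, h2⟩ := huniq 1 i (σ 1 i) 1 (φ 1 i) h'
    exact ⟨h1.symm, h2.symm⟩
  have hmulσ : ∀ g g' i, σ (g * g') i = σ g (σ g' i) ∧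
      φ (g * g') i = φ g (σ g' i) * φ g' i := by
    intro g g' i
    have h : x (σ (g * g') i) * (φ (g * g') i : G)
        = x (σ g (σ g' i)) * ((φ g (σ g' i) * φ g' i : F) : G) := by
      rw [← hrep (g * g') i, mul_assoc, hrep g' i, ← mul_assoc, hrep g, mul_assoc]
      push_cast
      ring_nf
    exact huniq 1 _ _ _ _ h
  -- conjugation helper
  have hconj : ∀ (f f' : F) (T : Module.End k V),
      (u f).toLinearMap ∘ₗ ((u f').toLinearMap ∘ₗ T ∘ₗ (u f').symm.toLinearMap)
          ∘ₗ (u f).symm.toLinearMap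
        = (u (f * f')).toLinearMap ∘ₗ T ∘ₗ (u (f * f')).symm.toLinearMap := by
    intro f f' T
    have huv : ∀ v, u f (u f' v) = (c f f' : k) • u (f * f') v := by
      intro v
      have := congrArg (fun L => L v) (hu f f')
      simpa using this
    have hsymm : ∀ v, (u f').symm ((u f).symm v)
        = (c f f' : k)⁻¹ • (u (f * f')).symm v := by
      intro v
      apply (u f').injective
      apply (u f).injective
      rw [LinearEquiv.apply_symm_apply, LinearEquiv.apply_symm_apply,
        map_smul, map_smul, huv, smul_smul,
        inv_mul_cancel₀ (Units.ne_zero _), one_smul,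
        LinearEquiv.apply_symm_apply]
    ext v
    simp only [LinearMap.comp_apply, LinearEquiv.coe_coe]
    rw [hsymm, map_smul, map_smul, map_smul, huv, smul_smul,
      inv_mul_cancel₀ (Units.ne_zero _), one_smul]
  refine ⟨?_, ?_, ?_, ?_, ?_, ?_⟩
  · intro a
    funext j
    rw [hact]
    have h1 : (σ (1 : G)).symm j = j := by
      apply (σ (1 : G)).injective
      rw [Equiv.apply_symm_apply, (hσ1 j).1]
    rw [h1, (hσ1 j).2, hu1]
    ext v; simp
  · intro g g' a
    funext j
    rw [hact, hact, hact]
    set i := (σ (g * g')).symm j with hi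
    have hj : j = σ (g * g') i := (Equiv.apply_symm_apply _ _).symm
    have h1 : (σ g).symm j = σ g' i := by
      apply (σ g).injective
      rw [Equiv.apply_symm_apply, hj, (hmulσ g g' i).1]
    have h2 : (σ g').symm ((σ g).symm j) = i := by
      rw [h1, Equiv.symm_apply_apply]
    rw [h1, Equiv.symm_apply_apply, (hmulσ g g' i).2, ← hconj]
  · intro g a b
    funext j
    simp only [Pi.mul_apply, hact]
    ext v
    simp [Module.End.mul_apply]
  · intro g
    funext j
    simp only [Pi.one_apply, hact]
    ext v
    simp [Module.End.one_apply]
  · intro g a b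
    funext j
    simp only [Pi.add_apply, hact]
    ext v
    simp
  · intro g r a
    funext j
    simp only [Pi.smul_apply, hact]
    ext v
    simp
end
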